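/- Let M ≥ 1 and let χ, χ̃ ∈ 𝒲̃⁻ ∪ 𝒲⁺_M with χ̃ ≤ χ and χ̃(−1) < 0. If χ ∈ 𝒲̃⁻ then Q₀(1) > 0, where Q₀(ε) := sup_{s ≤ −1} χ(ε·s)/χ̃(s). Define Q : (0,∞) → (0,∞) by Q(t) := 1 for t ≥ 1, and for 0 < t < 1: Q(t) := (Q₀(t)/Q₀(1))^{1/2} if χ ∈ 𝒲̃⁻, and Q(t) := t^{1/2} if χ ∈ 𝒲⁺_M. Then in either case the function h(t) := Q(t)²/t is non-increasing on (0, ∞). -/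

import Mathlib

open Set

/-- Membership in the class `𝒲̃⁻`: convex, non-decreasing, non-positive, vanishing at `0`,
and not identically `0` on `(−∞,0]`. -/
def WtildeMinus (χ : ℝ → ℝ) : Prop :=
  ConvexOn ℝ (Set.Iic 0) χ ∧ MonotoneOn χ (Set.Iic 0) ∧ (∀ t ≤ (0 : ℝ), χ t ≤ 0) ∧
    χ 0 = 0 ∧ ∃ t ≤ (0 : ℝ), χ t ≠ 0

/-- Membership in the class `𝒲⁺_M`: concave, non-decreasing, non-positive, vanishing at `0`,
not identically `0` on `(−∞,0]`, with `|t·χ'(t)| ≤ M·|χ(t)|` at every `t < 0`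
at which `χ` is differentiable. -/
def WplusM (M : ℝ) (χ : ℝ → ℝ) : Prop :=
  ConcaveOn ℝ (Set.Iic 0) χ ∧ MonotoneOn χ (Set.Iic 0) ∧ (∀ t ≤ (0 : ℝ), χ t ≤ 0) ∧
    χ 0 = 0 ∧ (∃ t ≤ (0 : ℝ), χ t ≠ 0) ∧
    ∀ t < (0 : ℝ), ∀ d : ℝ, HasDerivAt χ d t → |t * d| ≤ M * |χ t|

/-- Lemma 3.4 of the paper: with `Q₀(ε) := sup_{s ≤ −1} χ(ε·s)/χ̃(s)`, one has `Q₀(1) > 0`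
when `χ ∈ 𝒲̃⁻`, and the function `h(t) = Q(t)²/t` is non-increasing on `(0,∞)`, where
`Q(t) = 1` for `t ≥ 1` and, for `0 < t < 1`, `Q(t) = (Q₀(t)/Q₀(1))^{1/2}` if `χ ∈ 𝒲̃⁻`
and `Q(t) = t^{1/2}` if `χ ∈ 𝒲⁺_M`. -/
theorem Q_squared_div_t_antitone
    (M : ℝ) (hM : 1 ≤ M) (χ χt : ℝ → ℝ)
    (hχ : WtildeMinus χ ∨ WplusM M χ) (hχt : WtildeMinus χt ∨ WplusM M χt)
    (hle : ∀ t ≤ (0 : ℝ), χt t ≤ χ t) (hχtm1 : χt (-1) < 0) :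
    ∀ Q0 : ℝ → ℝ,
      Q0 = (fun ε => ⨆ s : Set.Iic (-1 : ℝ), χ (ε * (s : ℝ)) / χt (s : ℝ)) →
      (WtildeMinus χ →
        0 < Q0 1 ∧
        AntitoneOn
          (fun t => (if 1 ≤ t then 1 else Real.sqrt (Q0 t / Q0 1)) ^ 2 / t)
          (Set.Ioi 0)) ∧
      (WplusM M χ →
        AntitoneOn
          (fun t => (if 1 ≤ t then (1 : ℝ) else Real.sqrt t) ^ 2 / t)
          (Set.Ioi 0)) := by
  intro Q0 hQ0
  haveI : Nonempty (Iic (-1 : ℝ)) := ⟨⟨-1, mem_Iic.mpr le_rfl⟩⟩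
  -- properties of χt
  have hχt_mono : MonotoneOn χt (Iic 0) := hχt.elim (fun h => h.2.1) (fun h => h.2.1)
  have hχt_neg : ∀ s : ℝ, s ≤ -1 → χt s < 0 := by
    intro s hs
    have h1 : χt s ≤ χt (-1) := hχt_mono (mem_Iic.mpr (by linarith)) (mem_Iic.mpr (by norm_num)) hs
    linarith
  constructor
  · -- convex case
    intro hc
    obtain ⟨hconv, hmono, hnonpos, h0, t0, ht0, hne0⟩ := hc
    -- the ratio is in [0,1] for 0 < ε ≤ 1
    have hrat_nonneg : ∀ ε : ℝ, 0 < ε → ∀ s : ℝ, s ≤ -1 → 0 ≤ χ (ε * s) / χt s := by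
      intro ε hε s hs
      have h1 : ε * s ≤ 0 := mul_nonpos_iff.mpr (Or.inl ⟨hε.le, by linarith⟩)
      exact div_nonneg_iff.mpr (Or.inr ⟨hnonpos _ h1, (hχt_neg s hs).le⟩)
    have hrat_le_one : ∀ ε : ℝ, 0 < ε → ε ≤ 1 → ∀ s : ℝ, s ≤ -1 → χ (ε * s) / χt s ≤ 1 := by
      intro ε hε hε1 s hs
      have hss : s ≤ ε * s := by nlinarith
      have h1 : ε * s ≤ 0 := mul_nonpos_iff.mpr (Or.inl ⟨hε.le, by linarith⟩)
      have h2 : χt s ≤ χ (ε * s) :=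
        le_trans (hle s (by linarith)) (hmono (by simp; linarith) (by simpa using h1) hss)
      rw [div_le_iff_of_neg (hχt_neg s hs)]
      linarith
    have hbdd : ∀ ε : ℝ, 0 < ε → ε ≤ 1 →
        BddAbove (Set.range fun s : Iic (-1 : ℝ) => χ (ε * (s : ℝ)) / χt (s : ℝ)) := by
      intro ε hε hε1
      refine ⟨1, ?_⟩
      rintro _ ⟨s, rfl⟩
      exact hrat_le_one ε hε hε1 s s.2
    have hQ0_ge : ∀ ε : ℝ, 0 < ε → ε ≤ 1 → ∀ s : Iic (-1 : ℝ),
        χ (ε * (s : ℝ)) / χt (s : ℝ) ≤ Q0 ε := by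
      intro ε hε hε1 s
      rw [hQ0]
      exact le_ciSup (hbdd ε hε hε1) s
    have hQ0_nonneg : ∀ ε : ℝ, 0 < ε → ε ≤ 1 → 0 ≤ Q0 ε := by
      intro ε hε hε1
      exact le_trans (hrat_nonneg ε hε (-1) le_rfl)
        (hQ0_ge ε hε hε1 ⟨-1, mem_Iic.mpr le_rfl⟩)
    -- positivity of Q0 1
    have ht0neg : χ t0 < 0 := lt_of_le_of_ne (hnonpos t0 ht0) hne0
    have hQ1pos : 0 < Q0 1 := by
      set s0 : ℝ := min t0 (-1) with hs0
      have hs0le : s0 ≤ -1 := min_le_right _ _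
      have hs0t0 : s0 ≤ t0 := min_le_left _ _
      have hχs0 : χ s0 ≤ χ t0 := hmono (by simp; linarith) (by simpa using ht0) hs0t0
      have hpos : 0 < χ (1 * s0) / χt s0 := by
        rw [one_mul]
        exact div_pos_iff.mpr (Or.inr ⟨by linarith, hχt_neg s0 hs0le⟩)
      exact lt_of_lt_of_le hpos (hQ0_ge 1 one_pos le_rfl ⟨s0, mem_Iic.mpr hs0le⟩)
    refine ⟨hQ1pos, ?_⟩
    -- key inequality: Q0 ε' * ε ≤ Q0 ε * ε' for 0 < ε ≤ ε' ≤ 1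
    have hkey : ∀ ε ε' : ℝ, 0 < ε → ε ≤ ε' → ε' ≤ 1 → Q0 ε' * ε ≤ Q0 ε * ε' := by
      intro ε ε' hε hεε' hε'1
      have hε' : 0 < ε' := lt_of_lt_of_le hε hεε'
      have hsup : Q0 ε' ≤ Q0 ε * ε' / ε := by
        conv_lhs => rw [hQ0]
        refine ciSup_le ?_
        rintro ⟨s, hs⟩
        simp only
        have hs' : s ≤ -1 := hs
        have hcneg : χt s < 0 := hχt_neg s hs
        -- convexity step: χ (ε * s) ≤ (ε/ε') * χ (ε' * s)
        have hmem1 : (0 : ℝ) ∈ Iic (0 : ℝ) := mem_Iic.mpr le_rfl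
        have hmem2 : ε' * s ∈ Iic (0 : ℝ) := by
          simp only [mem_Iic]
          nlinarith [hs']
        have hb : (0:ℝ) ≤ ε / ε' := div_nonneg hε.le hε'.le
        have ha : (0:ℝ) ≤ 1 - ε / ε' := by
          have : ε / ε' ≤ 1 := (div_le_one hε').mpr hεε'
          linarith
        have hcvx := hconv.2 hmem1 hmem2 ha hb (by ring)
        have heq : (1 - ε / ε') • (0:ℝ) + (ε / ε') • (ε' * s) = ε * s := by
          field_simp
          simp only [smul_eq_mul, mul_zero, zero_add]
          rw [← mul_assoc, div_mul_cancel₀ ε hε'.ne']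
        rw [heq, h0] at hcvx
        -- hcvx : χ (ε * s) ≤ (1 - ε/ε') * 0 + (ε/ε') * χ (ε' * s)
        have hstep : ε' * χ (ε * s) ≤ ε * χ (ε' * s) := by
          have h2 : ε' * χ (ε * s) ≤ ε' * ((ε / ε') * χ (ε' * s)) := by
            apply mul_le_mul_of_nonneg_left _ hε'.le
            simpa using hcvx
          have h3 : ε' * ((ε / ε') * χ (ε' * s)) = ε * χ (ε' * s) := by
            field_simp
          linarith
        -- divide by χt s < 0
        have hinv : (χt s)⁻¹ ≤ 0 := (inv_nonpos).mpr hcneg.le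
        have h4 : (ε * χ (ε' * s)) * (χt s)⁻¹ ≤ (ε' * χ (ε * s)) * (χt s)⁻¹ :=
          mul_le_mul_of_nonpos_right hstep hinv
        have h5 : χ (ε * s) / χt s ≤ Q0 ε := hQ0_ge ε hε (le_trans hεε' hε'1) ⟨s, hs⟩
        rw [le_div_iff₀ hε]
        have e1 : χ (ε' * s) / χt s * ε = (ε * χ (ε' * s)) * (χt s)⁻¹ := by
          rw [div_eq_mul_inv]; ring
        have e2 : (ε' * χ (ε * s)) * (χt s)⁻¹ = (χ (ε * s) / χt s) * ε' := by
          rw [div_eq_mul_inv]; ring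
        rw [e1]
        calc (ε * χ (ε' * s)) * (χt s)⁻¹ ≤ (ε' * χ (ε * s)) * (χt s)⁻¹ := h4
          _ = (χ (ε * s) / χt s) * ε' := e2
          _ ≤ Q0 ε * ε' := mul_le_mul_of_nonneg_right h5 hε'.le
      calc Q0 ε' * ε ≤ (Q0 ε * ε' / ε) * ε := mul_le_mul_of_nonneg_right hsup hε.le
        _ = Q0 ε * ε' := by field_simp
    -- now the antitone statement
    intro x hx y hy hxy
    simp only [mem_Ioi] at hx hy
    simp only
    by_cases h1x : 1 ≤ x
    · have h1y : 1 ≤ y := le_trans h1x hxy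
      rw [if_pos h1x, if_pos h1y, one_pow]
      exact one_div_le_one_div_of_le (by linarith) hxy
    · push_neg at h1x
      have hgx : (if 1 ≤ x then 1 else Real.sqrt (Q0 x / Q0 1)) ^ 2 / x
          = Q0 x / Q0 1 / x := by
        rw [if_neg (not_le.mpr h1x), Real.sq_sqrt (div_nonneg (hQ0_nonneg x hx h1x.le) hQ1pos.le)]
      rw [hgx]
      have hxle : 1 ≤ Q0 x / Q0 1 / x := by
        have := hkey x 1 hx h1x.le le_rfl
        rw [one_le_div hx, le_div_iff₀ hQ1pos]
        nlinarith
      by_cases h1y : 1 ≤ y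
      · rw [if_pos h1y, one_pow]
        have : 1 / y ≤ 1 := by
          rw [div_le_one hy]; exact h1y
        linarith
      · push_neg at h1y
        rw [if_neg (not_le.mpr h1y), Real.sq_sqrt (div_nonneg (hQ0_nonneg y hy h1y.le) hQ1pos.le)]
        have hk := hkey x y hx hxy h1y.le
        rw [div_div, div_div, div_le_div_iff₀ (by positivity) (by positivity)]
        nlinarith
  · -- concave case: trivial arithmetic
    intro _
    intro x hx y hy hxy
    simp only [mem_Ioi] at hx hy
    simp only
    by_cases h1x : 1 ≤ x
    · have h1y : 1 ≤ y := le_trans h1x hxy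
      rw [if_pos h1x, if_pos h1y, one_pow]
      exact one_div_le_one_div_of_le (by linarith) hxy
    · push_neg at h1x
      rw [if_neg (not_le.mpr h1x), Real.sq_sqrt hx.le]
      have hxx : x / x = 1 := div_self (ne_of_gt hx)
      rw [hxx]
      by_cases h1y : 1 ≤ y
      · rw [if_pos h1y, one_pow]
        rw [div_le_one hy]; exact h1y
      · push_neg at h1y
        rw [if_neg (not_le.mpr h1y), Real.sq_sqrt hy.le, div_self (ne_of_gt hy)]
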